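/- For the k-step wild binary segmentation model with B random intervals each of length p, the selection event {y : M^{WBS}_{1:k}(y,w) = {b_{1:k}, d_{1:k}, j_{1:k}}} is a polyhedral cone {y : Γy ≥ 0}, and the number of rows of Γ is at most 2∑_{ℓ=1}^{k}((B−ℓ)(p−1) + (p−2)). -/
import Mathlib


/-- Sum of the entries of `y` over the (1-indexed) data positions `a, ..., b`. -/
noncomputable def segSum (n : ℕ) (y : Fin n → ℝ) (a b : ℕ) : ℝ :=
  ∑ i ∈ Finset.Icc a b, if h : i - 1 < n then y ⟨i - 1, h⟩ else 0

/-- Sample mean of `y` over the (1-indexed) data positions `a, ..., b`. -/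
noncomputable def segMean (n : ℕ) (y : Fin n → ℝ) (a b : ℕ) : ℝ :=
  segSum n y a b / ((b : ℝ) - a + 1)

/-- CUSUM statistic `g_{(s,b,e)}ᵀ y`: the weighted difference between the sample mean of
`y_{(b+1):e}` and the sample mean of `y_{s:b}`. -/
noncomputable def cusum (n : ℕ) (s b e : ℕ) (y : Fin n → ℝ) : ℝ :=
  Real.sqrt (1 / (1 / ((e : ℝ) - b) + 1 / ((b : ℝ) + 1 - s))) *
    (segMean n y (b + 1) e - segMean n y s b)

/-- Interval index `j'` is still usable at step `ℓ` of wild binary segmentation: the interval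
`w j'` does not contain any of the previously found changepoints `b 0, ..., b (ℓ-1)`. -/
def wbsActive {B : ℕ} (w : Fin B → ℕ × ℕ) (b : ℕ → ℕ) (ℓ : ℕ) (j' : Fin B) : Prop :=
  ∀ i < ℓ, ¬((w j').1 ≤ b i ∧ b i ≤ (w j').2)

/-- The `k`-step wild binary segmentation selection event for the model
`{b_{1:k}, d_{1:k}, j_{1:k}}` with interval set `w`: at each step `ℓ`, the maximizing
interval is `j ℓ`, the changepoint is `b ℓ`, and its signed CUSUM statistic dominates, in
absolute value, every other candidate split of every active interval. -/
def wbsEvent (n : ℕ) {B : ℕ} (w : Fin B → ℕ × ℕ) (k : ℕ)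
    (b : ℕ → ℕ) (d : ℕ → ℝ) (j : ℕ → Fin B) (y : Fin n → ℝ) : Prop :=
  ∀ ℓ < k, wbsActive w b ℓ (j ℓ) ∧ (w (j ℓ)).1 ≤ b ℓ ∧ b ℓ < (w (j ℓ)).2 ∧
    ∀ j' : Fin B, wbsActive w b ℓ j' → ∀ b', (w j').1 ≤ b' → b' < (w j').2 →
      (j', b') ≠ (j ℓ, b ℓ) →
        cusum n (w j').1 b' (w j').2 y ≤ d ℓ * cusum n (w (j ℓ)).1 (b ℓ) (w (j ℓ)).2 y ∧
        - cusum n (w j').1 b' (w j').2 y ≤ d ℓ * cusum n (w (j ℓ)).1 (b ℓ) (w (j ℓ)).2 y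

/-- For `k`-step wild binary segmentation with `B` intervals each of length `p`,
the selection event is a polyhedral cone `{y : Γy ≥ 0}`, with the number of rows of `Γ`
at most `2 ∑_{ℓ=1}^{k} ((B − ℓ)(p − 1) + (p − 2))`. -/
noncomputable def segSumL (n a c : ℕ) : (Fin n → ℝ) →ₗ[ℝ] ℝ where
  toFun y := segSum n y a c
  map_add' y z := by
    simp only [segSum, ← Finset.sum_add_distrib]
    exact Finset.sum_congr rfl fun i _ => by split <;> simp
  map_smul' r y := by
    simp only [segSum, RingHom.id_apply, smul_eq_mul, Finset.mul_sum]
    exact Finset.sum_congr rfl fun i _ => by split <;> simp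

noncomputable def cusumL (n s b e : ℕ) : (Fin n → ℝ) →ₗ[ℝ] ℝ :=
  Real.sqrt (1 / (1 / ((e : ℝ) - b) + 1 / ((b : ℝ) + 1 - s))) •
    ((((e : ℝ) - ((b : ℝ) + 1) + 1)⁻¹) • segSumL n (b + 1) e -
      (((b : ℝ) - s + 1)⁻¹) • segSumL n s b)

lemma cusumL_apply (n s b e : ℕ) (y : Fin n → ℝ) :
    cusumL n s b e y = cusum n s b e y := by
  simp only [cusumL, cusum, segMean, LinearMap.smul_apply, LinearMap.sub_apply,
    smul_eq_mul, segSumL, LinearMap.coe_mk, AddHom.coe_mk]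
  push_cast
  ring

lemma single_sum (n : ℕ) (L : (Fin n → ℝ) →ₗ[ℝ] ℝ) (y : Fin n → ℝ) :
    ∑ x, L (Pi.single x 1) * y x = L y := by
  have hy : y = ∑ x, y x • (Pi.single x 1 : Fin n → ℝ) := by
    ext c
    rw [Finset.sum_apply]
    simp [Pi.single_apply]
  conv_rhs => rw [hy]
  rw [map_sum]
  exact Finset.sum_congr rfl fun x _ => by rw [map_smul, smul_eq_mul, mul_comm]

theorem k_step_wbs_polyhedral (n B k p : ℕ) (hn : 3 ≤ n) (hp : 2 ≤ p)
    (w : Fin B → ℕ × ℕ)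
    (hw : ∀ j' : Fin B, 1 ≤ (w j').1 ∧ (w j').2 ≤ n ∧ (w j').2 - (w j').1 + 1 = p)
    (b : ℕ → ℕ) (d : ℕ → ℝ) (j : ℕ → Fin B)
    (hd : ∀ ℓ < k, d ℓ = 1 ∨ d ℓ = -1)
    (hb : ∀ ℓ < k, wbsActive w b ℓ (j ℓ) ∧ (w (j ℓ)).1 ≤ b ℓ ∧ b ℓ < (w (j ℓ)).2) :
    ∃ (m : ℕ) (Γ : Matrix (Fin m) (Fin n) ℝ),
      m ≤ 2 * ∑ ℓ ∈ Finset.range k, ((B - (ℓ + 1)) * (p - 1) + (p - 2)) ∧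
      ∀ y : Fin n → ℝ, wbsEvent n w k b d j y ↔ ∀ i, 0 ≤ Γ.mulVec y i := by
  classical
  have hjmem : ∀ i, i < k → (w (j i)).1 ≤ b i ∧ b i ≤ (w (j i)).2 := fun i hi =>
    ⟨(hb i hi).2.1, le_of_lt (hb i hi).2.2⟩
  have hjne : ∀ i i', i' < i → i < k → j i ≠ j i' := by
    intro i i' hi' hik heq
    have h1 := (hb i hik).1 i' hi'
    rw [heq] at h1
    exact h1 (hjmem i' (hi'.trans hik))
  -- candidate sets per step
  set S : ℕ → Finset (Fin B × ℕ) := fun ℓ =>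
    ((Finset.univ : Finset (Fin B)) ×ˢ Finset.range (n+1)).filter
      (fun q => wbsActive w b ℓ q.1 ∧ (w q.1).1 ≤ q.2 ∧ q.2 < (w q.1).2 ∧
        (q.1, q.2) ≠ (j ℓ, b ℓ)) with hS
  have hS_mem : ∀ ℓ q, q ∈ S ℓ ↔ (wbsActive w b ℓ q.1 ∧ (w q.1).1 ≤ q.2 ∧
      q.2 < (w q.1).2 ∧ (q.1, q.2) ≠ (j ℓ, b ℓ)) := by
    intro ℓ q
    constructor
    · exact fun h => (Finset.mem_filter.mp h).2
    · intro h
      refine Finset.mem_filter.mpr ⟨Finset.mem_product.mpr ⟨Finset.mem_univ _, ?_⟩, h⟩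
      have h2 := (hw q.1).2.1
      have h3 := h.2.2.1
      exact Finset.mem_range.mpr (by omega)
  -- cardinality of each candidate set
  have hScard : ∀ ℓ, ℓ < k → (S ℓ).card ≤ (B - (ℓ+1)) * (p-1) + (p-2) := by
    intro ℓ hℓ
    set Act : Finset (Fin B) := Finset.univ.filter (wbsActive w b ℓ) with hAct
    have hjℓAct : j ℓ ∈ Act := Finset.mem_filter.mpr ⟨Finset.mem_univ _, (hb ℓ hℓ).1⟩
    have hActcard : Act.card ≤ B - ℓ := by
      have himg : (Finset.range ℓ).image j ⊆ Finset.univ \ Act := by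
        intro x hx
        obtain ⟨i, hi, rfl⟩ := Finset.mem_image.mp hx
        rw [Finset.mem_range] at hi
        refine Finset.mem_sdiff.mpr ⟨Finset.mem_univ _, fun hmem => ?_⟩
        exact (Finset.mem_filter.mp hmem).2 i hi (hjmem i (hi.trans hℓ))
      have hinj : ((Finset.range ℓ).image j).card = ℓ := by
        rw [Finset.card_image_of_injOn, Finset.card_range]
        intro a ha a' ha' heq
        rw [Finset.mem_coe, Finset.mem_range] at ha ha'
        rcases lt_trichotomy a a' with h | h | h
        · exact absurd heq.symm (hjne a' a h (ha'.trans hℓ))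
        · exact h
        · exact absurd heq (hjne a a' h (ha.trans hℓ))
      have h4 := Finset.card_le_card himg
      rw [hinj, Finset.card_sdiff_of_subset (Finset.subset_univ _)] at h4
      have h5 : Act.card ≤ B := by
        simpa using Finset.card_le_card (Finset.subset_univ Act)
      simp only [Finset.card_univ, Fintype.card_fin] at h4
      omega
    set Bs : Fin B → Finset ℕ := fun j' =>
      if j' = j ℓ then (Finset.Ico (w j').1 (w j').2).erase (b ℓ)
      else Finset.Ico (w j').1 (w j').2 with hBs
    have hsub : S ℓ ⊆ Act.biUnion (fun j' => {j'} ×ˢ Bs j') := by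
      intro q hq
      rw [hS_mem] at hq
      refine Finset.mem_biUnion.mpr ⟨q.1, Finset.mem_filter.mpr ⟨Finset.mem_univ _, hq.1⟩, ?_⟩
      rw [Finset.mem_product, Finset.mem_singleton]
      refine ⟨rfl, ?_⟩
      have hIco : q.2 ∈ Finset.Ico (w q.1).1 (w q.1).2 :=
        Finset.mem_Ico.mpr ⟨hq.2.1, hq.2.2.1⟩
      by_cases hqj : q.1 = j ℓ
      · rw [hBs]
        simp only [hqj, if_pos rfl]
        refine Finset.mem_erase.mpr ⟨fun hb' => hq.2.2.2 ?_, by rw [← hqj]; exact hIco⟩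
        rw [Prod.ext_iff]
        exact ⟨hqj, hb'⟩
      · rw [hBs]
        simp only [if_neg hqj]
        exact hIco
    have hIcoCard : ∀ j' : Fin B, (Finset.Ico (w j').1 (w j').2).card = p - 1 := by
      intro j'
      rw [Nat.card_Ico]
      have := (hw j').2.2
      omega
    have hBsjℓ : (Bs (j ℓ)).card = p - 2 := by
      have hval : Bs (j ℓ) = (Finset.Ico (w (j ℓ)).1 (w (j ℓ)).2).erase (b ℓ) := by
        rw [hBs]; simp
      rw [hval]
      rw [Finset.card_erase_of_mem (Finset.mem_Ico.mpr ⟨(hb ℓ hℓ).2.1, (hb ℓ hℓ).2.2⟩),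
        hIcoCard]
      omega
    calc (S ℓ).card ≤ (Act.biUnion (fun j' => {j'} ×ˢ Bs j')).card :=
        Finset.card_le_card hsub
      _ ≤ ∑ j' ∈ Act, ({j'} ×ˢ Bs j').card := Finset.card_biUnion_le
      _ = ∑ j' ∈ Act, (Bs j').card := by
        refine Finset.sum_congr rfl fun j' _ => ?_
        rw [Finset.card_product, Finset.card_singleton, one_mul]
      _ = (Bs (j ℓ)).card + ∑ j' ∈ Act.erase (j ℓ), (Bs j').card :=
        (Finset.add_sum_erase _ _ hjℓAct).symm
      _ ≤ (p-2) + (B - (ℓ+1)) * (p-1) := by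
        refine Nat.add_le_add (le_of_eq hBsjℓ) ?_
        have hstep : ∑ j' ∈ Act.erase (j ℓ), (Bs j').card
            = (Act.erase (j ℓ)).card * (p-1) := by
          rw [Finset.sum_congr rfl (fun j' hj' => ?_), Finset.sum_const, smul_eq_mul]
          rw [hBs]
          simp only [if_neg (Finset.ne_of_mem_erase hj')]
          exact hIcoCard j'
        rw [hstep]
        have : (Act.erase (j ℓ)).card ≤ B - (ℓ+1) := by
          rw [Finset.card_erase_of_mem hjℓAct]
          have : 1 ≤ Act.card := Finset.card_pos.mpr ⟨_, hjℓAct⟩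
          omega
        exact Nat.mul_le_mul_right _ this
      _ = (B - (ℓ+1)) * (p-1) + (p-2) := Nat.add_comm _ _
  -- the full index set
  set T : Finset (ℕ × (Fin B × ℕ) × Bool) :=
    (Finset.range k).biUnion (fun ℓ => {ℓ} ×ˢ (S ℓ ×ˢ (Finset.univ : Finset Bool)))
    with hT
  have hT_mem : ∀ t : ℕ × (Fin B × ℕ) × Bool, t ∈ T ↔ t.1 < k ∧ t.2.1 ∈ S t.1 := by
    intro t
    constructor
    · intro h
      obtain ⟨ℓ, hℓ, hmem⟩ := Finset.mem_biUnion.mp h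
      obtain ⟨h1, h2⟩ := Finset.mem_product.mp hmem
      obtain ⟨h3, _⟩ := Finset.mem_product.mp h2
      rw [Finset.mem_singleton] at h1
      rw [Finset.mem_range] at hℓ
      exact ⟨by rw [h1]; exact hℓ, by rw [h1]; exact h3⟩
    · rintro ⟨h1, h2⟩
      exact Finset.mem_biUnion.mpr ⟨t.1, Finset.mem_range.mpr h1,
        Finset.mem_product.mpr ⟨Finset.mem_singleton_self _,
          Finset.mem_product.mpr ⟨h2, Finset.mem_univ _⟩⟩⟩
  have hTcard : T.card ≤ 2 * ∑ ℓ ∈ Finset.range k, ((B - (ℓ+1)) * (p-1) + (p-2)) := by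
    calc T.card ≤ ∑ ℓ ∈ Finset.range k,
        (({ℓ} : Finset ℕ) ×ˢ (S ℓ ×ˢ (Finset.univ : Finset Bool))).card :=
        Finset.card_biUnion_le
      _ = ∑ ℓ ∈ Finset.range k, 2 * (S ℓ).card := by
        refine Finset.sum_congr rfl fun ℓ _ => ?_
        rw [Finset.card_product, Finset.card_product, Finset.card_singleton,
          Finset.card_univ, Fintype.card_bool, one_mul, Nat.mul_comm]
      _ ≤ ∑ ℓ ∈ Finset.range k, 2 * ((B - (ℓ+1)) * (p-1) + (p-2)) :=
        Finset.sum_le_sum fun ℓ hℓ =>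
          Nat.mul_le_mul_left _ (hScard ℓ (Finset.mem_range.mp hℓ))
      _ = 2 * ∑ ℓ ∈ Finset.range k, ((B - (ℓ+1)) * (p-1) + (p-2)) :=
        (Finset.mul_sum _ _ _).symm
  -- the row functionals
  set F : ℕ × (Fin B × ℕ) × Bool → ((Fin n → ℝ) →ₗ[ℝ] ℝ) := fun t =>
    d t.1 • cusumL n (w (j t.1)).1 (b t.1) (w (j t.1)).2 +
      (if t.2.2 then (1:ℝ) else -1) • cusumL n (w t.2.1.1).1 t.2.1.2 (w t.2.1.1).2
    with hF
  have hFval : ∀ t (y : Fin n → ℝ), F t y =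
      d t.1 * cusum n (w (j t.1)).1 (b t.1) (w (j t.1)).2 y +
      (if t.2.2 then (1:ℝ) else -1) * cusum n (w t.2.1.1).1 t.2.1.2 (w t.2.1.1).2 y := by
    intro t y
    rw [hF]
    simp only [LinearMap.add_apply, LinearMap.smul_apply, smul_eq_mul, cusumL_apply]
  refine ⟨T.card, Matrix.of (fun i x => F ((T.equivFin.symm i : T) : _) (Pi.single x 1)),
    hTcard, fun y => ?_⟩
  have hmulVec : ∀ i, (Matrix.of (fun i x =>
      F ((T.equivFin.symm i : T) : _) (Pi.single x 1))).mulVec y i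
      = F ((T.equivFin.symm i : T) : _) y := by
    intro i
    simp only [Matrix.mulVec, dotProduct, Matrix.of_apply]
    exact single_sum n _ y
  constructor
  · intro hE i
    rw [hmulVec]
    have hm := Finset.coe_mem (T.equivFin.symm i)
    rw [hT_mem] at hm
    obtain ⟨hk1, hq⟩ := hm
    rw [hS_mem] at hq
    set t := ((T.equivFin.symm i : T) : ℕ × (Fin B × ℕ) × Bool) with ht
    have hpair := (hE t.1 hk1).2.2.2 t.2.1.1 hq.1 t.2.1.2 hq.2.1 hq.2.2.1 hq.2.2.2
    rw [hFval]
    cases htb : t.2.2 with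
    | false =>
      norm_num
      linarith [hpair.1]
    | true =>
      norm_num
      linarith [hpair.2]
  · intro h ℓ hℓ
    refine ⟨(hb ℓ hℓ).1, (hb ℓ hℓ).2.1, (hb ℓ hℓ).2.2, ?_⟩
    intro j' hact b' h1 h2 hne
    have hmemT : ∀ sgn : Bool, (ℓ, (j', b'), sgn) ∈ T := fun sgn =>
      (hT_mem _).mpr ⟨hℓ, (hS_mem _ _).mpr ⟨hact, h1, h2, hne⟩⟩
    have key : ∀ sgn : Bool, 0 ≤ F (ℓ, (j', b'), sgn) y := by
      intro sgn
      have := h (T.equivFin ⟨_, hmemT sgn⟩)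
      rw [hmulVec, Equiv.symm_apply_apply] at this
      exact this
    have k1 := key false
    have k2 := key true
    rw [hFval] at k1 k2
    norm_num at k1 k2
    constructor
    · linarith
    · linarith
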